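/- Let V be a nonzero finite-dimensional ℂ-linear subspace of ℂ[z₁,…,zₙ], and let A(V) := { v(s) : s ∈ V, s ≠ 0 }. Then there exists a family (s_α)_{α ∈ A(V)} of elements of V which is a basis of V and such that each s_α has the form s_α = z^α + ∑_β a_β z^β, where the sum runs only over exponents β with α <lex β and β ∉ A(V). -/

import Mathlib

/-- `α <lex β`: at the smallest index `i` with `α i ≠ β i` one has `α i < β i`. -/
def LexLt {n : ℕ} (α β : Fin n →₀ ℕ) : Prop :=
  ∃ i : Fin n, (∀ j : Fin n, j < i → α j = β j) ∧ α i < β i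

/-- `m` is the lexicographically smallest element of the finite set `S` of exponents. -/
def IsLexMin {n : ℕ} (S : Finset (Fin n →₀ ℕ)) (m : Fin n →₀ ℕ) : Prop :=
  m ∈ S ∧ ∀ m' ∈ S, m' ≠ m → LexLt m m'

open MvPolynomial

namespace Stmt4Aux

variable {n : ℕ}

lemma lexLt_iff {α β : Fin n →₀ ℕ} : LexLt α β ↔ toLex α < toLex β :=
  Finsupp.Lex.lt_iff.symm

/-- The set of lex-minimal exponents of nonzero elements of `V`. -/
def AP (V : Submodule ℂ (MvPolynomial (Fin n) ℂ)) : Set (Fin n →₀ ℕ) :=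
  {m | ∃ s ∈ V, s ≠ 0 ∧ IsLexMin s.support m}

lemma isLexMin_iff {S : Finset (Fin n →₀ ℕ)} {m : Fin n →₀ ℕ} :
    IsLexMin S m ↔ m ∈ S ∧ ∀ m' ∈ S, toLex m ≤ toLex m' := by
  constructor
  · rintro ⟨h1, h2⟩
    refine ⟨h1, fun m' hm' => ?_⟩
    rcases eq_or_ne m' m with rfl | hne
    · exact le_refl _
    · exact le_of_lt (lexLt_iff.mp (h2 m' hm' hne))
  · rintro ⟨h1, h2⟩
    refine ⟨h1, fun m' hm' hne => lexLt_iff.mpr (lt_of_le_of_ne (h2 m' hm') ?_)⟩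
    exact fun h => hne (toLex.injective h.symm)

lemma AP_mono {V W : Submodule ℂ (MvPolynomial (Fin n) ℂ)} (h : V ≤ W) : AP V ⊆ AP W := by
  rintro m ⟨s, hs, h0, hmin⟩
  exact ⟨s, h hs, h0, hmin⟩

lemma coeff_ne_zero_of_mem_AP {V : Submodule ℂ (MvPolynomial (Fin n) ℂ)}
    {m : Fin n →₀ ℕ} (hm : m ∈ AP V) :
    ∃ s ∈ V, s ≠ 0 ∧ coeff m s ≠ 0 ∧ ∀ β, coeff β s ≠ 0 → toLex m ≤ toLex β := by
  obtain ⟨s, hs, h0, hmin⟩ := hm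
  rw [isLexMin_iff] at hmin
  exact ⟨s, hs, h0, mem_support_iff.mp hmin.1,
    fun β hβ => hmin.2 β (mem_support_iff.mpr hβ)⟩

lemma mem_AP {V : Submodule ℂ (MvPolynomial (Fin n) ℂ)} {s : MvPolynomial (Fin n) ℂ}
    {m : Fin n →₀ ℕ} (hs : s ∈ V) (hm : coeff m s ≠ 0)
    (hmin : ∀ β, coeff β s ≠ 0 → toLex m ≤ toLex β) : m ∈ AP V := by
  refine ⟨s, hs, fun h => hm (by simp [h]), isLexMin_iff.mpr ⟨mem_support_iff.mpr hm,
    fun m' hm' => hmin m' (mem_support_iff.mp hm')⟩⟩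

lemma aux (k : ℕ) (V : Submodule ℂ (MvPolynomial (Fin n) ℂ))
    (hV : FiniteDimensional ℂ V) (hk : Module.finrank ℂ V ≤ k) :
    ∃ f : (Fin n →₀ ℕ) → MvPolynomial (Fin n) ℂ,
      (∀ α ∈ AP V, f α ∈ V) ∧
      (∀ α ∈ AP V, coeff α (f α) = 1) ∧
      (∀ α ∈ AP V, ∀ β, β ≠ α → coeff β (f α) ≠ 0 →
         toLex α < toLex β ∧ β ∉ AP V) ∧
      V ≤ Submodule.span ℂ (f '' AP V) := by
  classical
  induction k generalizing V with
  | zero =>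
    have hV0 : V = ⊥ := Submodule.finrank_eq_zero.mp (Nat.le_zero.mp hk)
    subst hV0
    refine ⟨0, ?_, ?_, ?_, ?_⟩ <;>
      first
        | (intro α hα; obtain ⟨s, hs, h0, -⟩ := hα; exact absurd (Submodule.mem_bot ℂ |>.mp hs) h0)
        | exact bot_le
  | succ k ih =>
    by_cases hbot : V = ⊥
    · subst hbot
      refine ⟨0, ?_, ?_, ?_, ?_⟩ <;>
        first
          | (intro α hα; obtain ⟨s, hs, h0, -⟩ := hα;
             exact absurd (Submodule.mem_bot ℂ |>.mp hs) h0)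
          | exact bot_le
    -- `AP V` is nonempty
    have hAne : (AP V).Nonempty := by
      obtain ⟨x, hxV, hx0⟩ := Submodule.exists_mem_ne_zero_of_ne_bot hbot
      obtain ⟨m, hm, hmin⟩ := x.support.exists_min_image (fun β => toLex β)
        (by simpa [MvPolynomial.support_eq_empty] using hx0)
      exact ⟨m, x, hxV, hx0, isLexMin_iff.mpr ⟨hm, hmin⟩⟩
    -- take the minimum `α₀` of `AP V`
    haveI : WellFoundedLT (Lex (Fin n →₀ ℕ)) := Finsupp.Lex.wellFoundedLT_of_finite
    obtain ⟨α₀, hα₀A, hα₀min⟩ :=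
      (IsWellFounded.wf : WellFounded ((· < ·) : Lex (Fin n →₀ ℕ) → _ → Prop)).has_min
        (toLex '' AP V) (hAne.image toLex)
    obtain ⟨α₀, hα₀A, rfl⟩ := hα₀A
    have hα₀min : ∀ α ∈ AP V, toLex α₀ ≤ toLex α := by
      intro α hα
      exact not_lt.mp (hα₀min (toLex α) ⟨α, hα, rfl⟩)
    obtain ⟨s, hsV, -, hsc, hsmin⟩ := coeff_ne_zero_of_mem_AP hα₀A
    set s₀ : MvPolynomial (Fin n) ℂ := (coeff α₀ s)⁻¹ • s with hs₀def
    have hs₀V : s₀ ∈ V := V.smul_mem _ hsV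
    have hs₀c : coeff α₀ s₀ = 1 := by
      simp [hs₀def, coeff_smul, inv_mul_cancel₀ hsc]
    have hs₀supp : ∀ β, coeff β s₀ ≠ 0 → toLex α₀ ≤ toLex β := by
      intro β hβ
      refine hsmin β fun h => hβ ?_
      simp [hs₀def, coeff_smul, h]
    -- the hyperplane W
    set W : Submodule ℂ (MvPolynomial (Fin n) ℂ) :=
      V ⊓ LinearMap.ker (lcoeff ℂ α₀) with hWdef
    have hWV : W ≤ V := inf_le_left
    have hWmem : ∀ x, x ∈ W ↔ x ∈ V ∧ coeff α₀ x = 0 := by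
      intro x
      simp [hWdef, LinearMap.mem_ker]
    haveI : FiniteDimensional ℂ W := Submodule.finiteDimensional_of_le hWV
    have hWlt : W < V := lt_of_le_of_ne hWV (by
      intro h
      have : s₀ ∈ W := h ▸ hs₀V
      rw [hWmem] at this
      simp [hs₀c] at this)
    have hWrank : Module.finrank ℂ W ≤ k := by
      have := Submodule.finrank_lt_finrank_of_lt (K := ℂ) hWlt
      omega
    obtain ⟨f', hf1, hf2, hf3, hf4⟩ := ih W inferInstance hWrank
    -- relating AP W and AP V
    have hAPW_sub : AP W ⊆ AP V := AP_mono hWV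
    have hα₀notW : α₀ ∉ AP W := by
      intro h
      obtain ⟨t, htW, -, htc, -⟩ := coeff_ne_zero_of_mem_AP h
      rw [hWmem] at htW
      exact htc htW.2
    have hmemW : ∀ γ ∈ AP V, γ ≠ α₀ → γ ∈ AP W := by
      intro γ hγ hne
      obtain ⟨t, htV, -, htc, htmin⟩ := coeff_ne_zero_of_mem_AP hγ
      have htα₀ : coeff α₀ t = 0 := by
        by_contra h
        have h1 := htmin α₀ h
        have h2 := hα₀min γ hγ
        exact hne (toLex.injective (le_antisymm h1 h2))
      exact mem_AP ((hWmem t).mpr ⟨htV, htα₀⟩) htc htmin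
    -- the correction
    set S : Finset (Fin n →₀ ℕ) := s₀.support.filter (· ∈ AP W) with hSdef
    have hSW : ∀ β ∈ S, β ∈ AP W := fun β hβ => (Finset.mem_filter.mp hβ).2
    set g : MvPolynomial (Fin n) ℂ := s₀ - ∑ β ∈ S, (coeff β s₀) • f' β with hgdef
    have hgV : g ∈ V := by
      refine V.sub_mem hs₀V (Submodule.sum_mem _ fun β hβ => V.smul_mem _ (hWV (hf1 β (hSW β hβ))))
    have hcoeffW : ∀ x ∈ W, coeff α₀ x = 0 := fun x hx => ((hWmem x).mp hx).2
    have hgc : coeff α₀ g = 1 := by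
      rw [hgdef, coeff_sub, hs₀c, coeff_sum]
      rw [Finset.sum_eq_zero, sub_zero]
      intro β hβ
      rw [coeff_smul, hcoeffW _ (hf1 β (hSW β hβ)), smul_zero]
    -- coefficients of g
    have hgcoeff : ∀ β', β' ≠ α₀ → coeff β' g ≠ 0 → toLex α₀ < toLex β' ∧ β' ∉ AP V := by
      intro β' hne hc
      constructor
      · by_contra hlt
        apply hc
        have hs₀β' : coeff β' s₀ = 0 := by
          by_contra h
          exact hlt (lt_of_le_of_ne (hs₀supp β' h) fun he => hne (toLex.injective he.symm))
        have hterm : ∀ β ∈ S, (coeff β s₀) • coeff β' (f' β) = 0 := by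
          intro β hβ
          rcases eq_or_ne (coeff β' (f' β)) 0 with h | h
          · rw [h, smul_zero]
          · exfalso
            have hβW := hSW β hβ
            have hβα₀ : toLex α₀ ≤ toLex β := hα₀min β (hAPW_sub hβW)
            rcases eq_or_ne β' β with rfl | hb
            · exact hlt (lt_of_le_of_ne hβα₀ fun he => hne (toLex.injective he.symm))
            · exact hlt (lt_trans
                (lt_of_le_of_ne hβα₀ fun he => hα₀notW (toLex.injective he ▸ hβW))
                (hf3 β hβW β' hb h).1)
        rw [hgdef, coeff_sub, hs₀β', coeff_sum, zero_sub, neg_eq_zero]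
        rw [Finset.sum_eq_zero]
        intro β hβ
        rw [coeff_smul]
        exact hterm β hβ
      · intro hβ'A
        apply hc
        have hβ'W : β' ∈ AP W := hmemW β' hβ'A hne
        have hterm : ∀ β ∈ S, β ≠ β' → (coeff β s₀) * coeff β' (f' β) = 0 := by
          intro β hβ hbb
          rcases eq_or_ne (coeff β' (f' β)) 0 with h | h
          · rw [h, mul_zero]
          · exact absurd hβ'W (hf3 β (hSW β hβ) β' (Ne.symm hbb) h).2
        rw [hgdef, coeff_sub, coeff_sum]
        simp only [coeff_smul, smul_eq_mul]
        by_cases hβ'S : β' ∈ S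
        · rw [Finset.sum_eq_single_of_mem β' hβ'S hterm, hf2 β' hβ'W, mul_one, sub_self]
        · have hs₀β' : coeff β' s₀ = 0 := by
            by_contra h
            exact hβ'S (Finset.mem_filter.mpr ⟨mem_support_iff.mpr h, hβ'W⟩)
          rw [Finset.sum_eq_zero fun β hβ => hterm β hβ (fun h => hβ'S (h ▸ hβ)), hs₀β',
            sub_zero]
    -- the new family
    set f : (Fin n →₀ ℕ) → MvPolynomial (Fin n) ℂ :=
      fun α => if α = α₀ then g else f' α with hfdef
    have hfα₀ : f α₀ = g := by simp [hfdef]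
    have hfother : ∀ α ∈ AP W, f α = f' α := by
      intro α hα
      have hne : α ≠ α₀ := fun h => hα₀notW (h ▸ hα)
      simp [hfdef, hne]
    refine ⟨f, ?_, ?_, ?_, ?_⟩
    · intro α hα
      rcases eq_or_ne α α₀ with rfl | hne
      · rwa [hfα₀]
      · rw [hfother α (hmemW α hα hne)]
        exact hWV (hf1 α (hmemW α hα hne))
    · intro α hα
      rcases eq_or_ne α α₀ with rfl | hne
      · rwa [hfα₀]
      · rw [hfother α (hmemW α hα hne)]
        exact hf2 α (hmemW α hα hne)
    · intro α hα β hβne hc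
      rcases eq_or_ne α α₀ with rfl | hne
      · rw [hfα₀] at hc
        exact hgcoeff β hβne hc
      · have hαW := hmemW α hα hne
        rw [hfother α hαW] at hc
        obtain ⟨hlt, hnW⟩ := hf3 α hαW β hβne hc
        refine ⟨hlt, fun hβA => ?_⟩
        rcases eq_or_ne β α₀ with rfl | hβne'
        · exact absurd (lt_of_lt_of_le hlt (hα₀min α hα)) (lt_irrefl _)
        · exact hnW (hmemW β hβA hβne')
    · -- spanning
      have himg : ∀ β ∈ AP W, f' β ∈ Submodule.span ℂ (f '' AP V) := by
        intro β hβ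
        rw [← hfother β hβ]
        exact Submodule.subset_span ⟨β, hAPW_sub hβ, rfl⟩
      have hspanW : W ≤ Submodule.span ℂ (f '' AP V) := by
        refine le_trans hf4 (Submodule.span_le.mpr ?_)
        rintro x ⟨β, hβ, rfl⟩
        exact himg β hβ
      have hs₀span : s₀ ∈ Submodule.span ℂ (f '' AP V) := by
        have : s₀ = g + ∑ β ∈ S, (coeff β s₀) • f' β := by rw [hgdef]; abel
        rw [this]
        exact Submodule.add_mem _ (hfα₀ ▸ Submodule.subset_span ⟨α₀, hα₀A, rfl⟩)
          (Submodule.sum_mem _ fun β hβ => Submodule.smul_mem _ _ (himg β (hSW β hβ)))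
      intro v hv
      have hw : v - (coeff α₀ v) • s₀ ∈ W := by
        rw [hWmem]
        exact ⟨V.sub_mem hv (V.smul_mem _ hs₀V), by simp [coeff_smul, hs₀c]⟩
      have : v = (v - (coeff α₀ v) • s₀) + (coeff α₀ v) • s₀ := by abel
      rw [this]
      exact Submodule.add_mem _ (hspanW hw) (Submodule.smul_mem _ _ hs₀span)

end Stmt4Aux

theorem stmt4 (n : ℕ) (V : Submodule ℂ (MvPolynomial (Fin n) ℂ))
    (hV : FiniteDimensional ℂ V) (hV0 : V ≠ ⊥)
    (A : Set (Fin n →₀ ℕ))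
    (hA : A = {m | ∃ s ∈ V, s ≠ 0 ∧ IsLexMin s.support m}) :
    ∃ b : Module.Basis A ℂ V,
      ∀ α : A,
        MvPolynomial.coeff (α : Fin n →₀ ℕ) ((b α : MvPolynomial (Fin n) ℂ)) = 1 ∧
        ∀ β : Fin n →₀ ℕ, β ≠ (α : Fin n →₀ ℕ) →
          MvPolynomial.coeff β ((b α : MvPolynomial (Fin n) ℂ)) ≠ 0 →
            LexLt (α : Fin n →₀ ℕ) β ∧ β ∉ A := by
  classical
  have hAeq : A = Stmt4Aux.AP V := hA
  obtain ⟨f, h1, h2, h3, h4⟩ := Stmt4Aux.aux (Module.finrank ℂ V) V hV le_rfl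
  rw [← hAeq] at h1 h2 h3 h4
  set e : A → V := fun α => ⟨f α, h1 α α.2⟩ with hedef
  have hli : LinearIndependent ℂ e := by
    rw [linearIndependent_iff']
    intro s g hsum i hi
    by_contra hgi
    set s' : Finset A := s.filter (fun α => g α ≠ 0) with hs'def
    have hs'ne : s'.Nonempty := ⟨i, Finset.mem_filter.mpr ⟨hi, hgi⟩⟩
    obtain ⟨a, has', hamin⟩ := s'.exists_min_image (fun α : A => toLex (α : Fin n →₀ ℕ)) hs'ne
    have hga : g a ≠ 0 := (Finset.mem_filter.mp has').2
    have has : a ∈ s := (Finset.mem_filter.mp has').1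
    have hpoly : (∑ α ∈ s, g α • f α) = 0 := by
      have := congrArg (Subtype.val : V → MvPolynomial (Fin n) ℂ) hsum
      simpa [hedef] using this
    have hcoeff := congrArg (MvPolynomial.coeff (a : Fin n →₀ ℕ)) hpoly
    rw [MvPolynomial.coeff_sum] at hcoeff
    simp only [MvPolynomial.coeff_smul, smul_eq_mul, MvPolynomial.coeff_zero] at hcoeff
    have hterm : ∀ α ∈ s, α ≠ a → g α * MvPolynomial.coeff (a : Fin n →₀ ℕ) (f α) = 0 := by
      intro α hα hne
      rcases eq_or_ne (g α) 0 with h | h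
      · rw [h, zero_mul]
      · have hαs' : α ∈ s' := Finset.mem_filter.mpr ⟨hα, h⟩
        rcases eq_or_ne (MvPolynomial.coeff (a : Fin n →₀ ℕ) (f α)) 0 with h2 | h2
        · rw [h2, mul_zero]
        · exfalso
          have hne' : (a : Fin n →₀ ℕ) ≠ (α : Fin n →₀ ℕ) :=
            fun h => hne (Subtype.ext h).symm
          have := (h3 α α.2 (a : Fin n →₀ ℕ) hne' h2).1
          exact absurd (lt_of_le_of_lt (hamin α hαs') this) (lt_irrefl _)
    rw [Finset.sum_eq_single_of_mem a has hterm, h2 a a.2, mul_one] at hcoeff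
    exact hga hcoeff
  have hsp : ⊤ ≤ Submodule.span ℂ (Set.range e) := by
    intro v _
    have hv1 : (v : MvPolynomial (Fin n) ℂ) ∈ Submodule.span ℂ (f '' A) := h4 v.2
    have himg : V.subtype '' Set.range e = f '' A := by
      ext x
      simp only [Set.mem_image, Set.mem_range, Submodule.coe_subtype, hedef]
      constructor
      · rintro ⟨y, ⟨α, rfl⟩, rfl⟩
        exact ⟨α, α.2, rfl⟩
      · rintro ⟨a, ha, rfl⟩
        exact ⟨⟨f a, h1 a ha⟩, ⟨⟨a, ha⟩, rfl⟩, rfl⟩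
    have hmap : (v : MvPolynomial (Fin n) ℂ) ∈
        Submodule.map V.subtype (Submodule.span ℂ (Set.range e)) := by
      rw [Submodule.map_span, himg]
      exact hv1
    obtain ⟨w, hw, hwv⟩ := hmap
    have : w = v := Subtype.ext hwv
    exact this ▸ hw
  refine ⟨Module.Basis.mk hli hsp, fun α => ?_⟩
  rw [Module.Basis.mk_apply]
  refine ⟨h2 α α.2, fun β hβ hc => ?_⟩
  obtain ⟨hlt, hnA⟩ := h3 α α.2 β hβ hc
  exact ⟨Stmt4Aux.lexLt_iff.mpr hlt, hnA⟩
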